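/- Let c₀, c₁, c₂ ∈ ℝ and let Ω be an open subset of {(t,x) ∈ ℝ² : x > 0 and c₀x⁴ + (24c₀t + c₁)x² + c₂ ≠ 0}. Then the function v(t,x) = √(2x)·(3c₀x⁴ + (24c₀t + c₁)x² − c₂)/(c₀x⁴ + (24c₀t + c₁)x² + c₂) solves the equation vₜ = vₓₓ − v³/x³ + (9/4)·v/x² on Ω. -/

import Mathlib

theorem sqrt2x (y : ℝ) (hy : 0 < y) :
    HasDerivAt (fun z : ℝ => Real.sqrt (2 * z)) ((Real.sqrt (2 * y))⁻¹) y := by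
  have h1 : HasDerivAt (fun z : ℝ => 2 * z) 2 y := by
    simpa using (hasDerivAt_id y).const_mul 2
  have h2 := (Real.hasDerivAt_sqrt (by positivity : (2:ℝ) * y ≠ 0)).comp y h1
  have hs : Real.sqrt (2 * y) ≠ 0 := by positivity
  refine h2.congr_deriv ?_
  field_simp

theorem aux_lin (a b y : ℝ) : HasDerivAt (fun z : ℝ => a * z + b) a y := by
  simpa using ((hasDerivAt_id y).const_mul a).add_const b

theorem aux_quartic (a b c y : ℝ) :
    HasDerivAt (fun z : ℝ => a * z ^ 4 + b * z ^ 2 + c) (4 * a * y ^ 3 + 2 * b * y) y := by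
  have h4 := (hasDerivAt_pow 4 y).const_mul a
  have h2 := (hasDerivAt_pow 2 y).const_mul b
  refine ((h4.add h2).add_const c).congr_deriv ?_
  push_cast; ring

theorem aux_quartic' (a b c y : ℝ) :
    HasDerivAt (fun z : ℝ => a * z ^ 4 + b * z ^ 2 - c) (4 * a * y ^ 3 + 2 * b * y) y := by
  have h4 := (hasDerivAt_pow 4 y).const_mul a
  have h2 := (hasDerivAt_pow 2 y).const_mul b
  refine ((h4.add h2).sub_const c).congr_deriv ?_
  push_cast; ring

theorem aux_cubic (a b y : ℝ) :
    HasDerivAt (fun z : ℝ => a * z ^ 3 + b * z) (3 * a * y ^ 2 + b) y := by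
  have h3 := (hasDerivAt_pow 3 y).const_mul a
  have h1 := (hasDerivAt_id y).const_mul b
  refine (h3.add h1).congr_deriv ?_
  push_cast; ring

noncomputable def g0 (c₀ c₁ c₂ t y : ℝ) : ℝ :=
  (((Real.sqrt (2 * y))⁻¹ * (3 * c₀ * y ^ 4 + (24 * c₀ * t + c₁) * y ^ 2 - c₂)
      + Real.sqrt (2 * y) * (4 * (3 * c₀) * y ^ 3 + 2 * (24 * c₀ * t + c₁) * y))
    * (c₀ * y ^ 4 + (24 * c₀ * t + c₁) * y ^ 2 + c₂)
    - Real.sqrt (2 * y) * (3 * c₀ * y ^ 4 + (24 * c₀ * t + c₁) * y ^ 2 - c₂)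
      * (4 * c₀ * y ^ 3 + 2 * (24 * c₀ * t + c₁) * y))
  / (c₀ * y ^ 4 + (24 * c₀ * t + c₁) * y ^ 2 + c₂) ^ 2

theorem key1 (c₀ c₁ c₂ t y : ℝ) (hy : 0 < y)
    (hne : c₀ * y ^ 4 + (24 * c₀ * t + c₁) * y ^ 2 + c₂ ≠ 0) :
    HasDerivAt (fun z => Real.sqrt (2 * z) * (3 * c₀ * z ^ 4 + (24 * c₀ * t + c₁) * z ^ 2 - c₂)
      / (c₀ * z ^ 4 + (24 * c₀ * t + c₁) * z ^ 2 + c₂)) (g0 c₀ c₁ c₂ t y) y :=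
  ((sqrt2x y hy).mul (aux_quartic' (3*c₀) (24*c₀*t+c₁) c₂ y)).div
    (aux_quartic c₀ (24*c₀*t+c₁) c₂ y) hne

set_option maxHeartbeats 4000000 in
/-- the function `v = √(2x)·(3c₀x⁴ + (24c₀t + c₁)x² − c₂)/(c₀x⁴ + (24c₀t + c₁)x² + c₂)`
solves `vₜ = vₓₓ − v³/x³ + (9/4)v/x²` on any open set where `x > 0` and the denominator is
nonzero. -/
theorem explicit_solution_of_semilinear_heat
    (c₀ c₁ c₂ : ℝ) (Ω : Set (ℝ × ℝ)) (hΩ : IsOpen Ω)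
    (hΩ' : ∀ q ∈ Ω, 0 < q.2 ∧ c₀ * q.2 ^ 4 + (24 * c₀ * q.1 + c₁) * q.2 ^ 2 + c₂ ≠ 0)
    (v : ℝ → ℝ → ℝ)
    (hv : ∀ t x : ℝ, v t x = Real.sqrt (2 * x) *
      (3 * c₀ * x ^ 4 + (24 * c₀ * t + c₁) * x ^ 2 - c₂) /
      (c₀ * x ^ 4 + (24 * c₀ * t + c₁) * x ^ 2 + c₂)) :
    ∀ q ∈ Ω, deriv (fun t => v t q.2) q.1
      = deriv^[2] (v q.1) q.2 - (v q.1 q.2) ^ 3 / q.2 ^ 3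
        + (9 / 4) * v q.1 q.2 / q.2 ^ 2 := by
  rintro ⟨t, x⟩ hq
  obtain ⟨hx, hD⟩ := hΩ' _ hq
  dsimp only at hx hD ⊢
  have hs0 : (0:ℝ) < Real.sqrt (2 * x) := Real.sqrt_pos.2 (by linarith)
  -- eventual equality of deriv (v t) with g0 near x
  have hU : ∀ᶠ y in nhds x, 0 < y ∧ c₀ * y ^ 4 + (24 * c₀ * t + c₁) * y ^ 2 + c₂ ≠ 0 := by
    have h1 : ∀ᶠ y in nhds x, 0 < y := eventually_gt_nhds hx
    have hc : Continuous (fun y : ℝ => c₀ * y ^ 4 + (24 * c₀ * t + c₁) * y ^ 2 + c₂) := by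
      continuity
    have h2 : ∀ᶠ y in nhds x, c₀ * y ^ 4 + (24 * c₀ * t + c₁) * y ^ 2 + c₂ ≠ 0 :=
      hc.continuousAt.eventually_ne hD
    exact h1.and h2
  have hvt : v t = fun z => Real.sqrt (2 * z) *
      (3 * c₀ * z ^ 4 + (24 * c₀ * t + c₁) * z ^ 2 - c₂) /
      (c₀ * z ^ 4 + (24 * c₀ * t + c₁) * z ^ 2 + c₂) := funext fun z => hv t z
  have hEq : deriv (v t) =ᶠ[nhds x] fun y => g0 c₀ c₁ c₂ t y := by
    filter_upwards [hU] with y hy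
    rw [hvt]
    exact (key1 c₀ c₁ c₂ t y hy.1 hy.2).deriv
  -- second space derivative
  have hSx := sqrt2x x hx
  have hSinv := hSx.inv hs0.ne'
  have hNNx := aux_quartic' (3*c₀) (24*c₀*t+c₁) c₂ x
  have hDDx := aux_quartic c₀ (24*c₀*t+c₁) c₂ x
  have hNN'x := aux_cubic (4*(3*c₀)) (2*(24*c₀*t+c₁)) x
  have hDD'x := aux_cubic (4*c₀) (2*(24*c₀*t+c₁)) x
  have hg2 := ((((hSinv.mul hNNx).add (hSx.mul hNN'x)).mul hDDx).sub
      ((hSx.mul hNNx).mul hDD'x)).div (hDDx.pow 2) (pow_ne_zero 2 hD)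
  have hiter : deriv^[2] (v t) x = deriv (fun y => g0 c₀ c₁ c₂ t y) x := by
    rw [show deriv^[2] (v t) = deriv (deriv (v t)) from rfl]
    exact hEq.deriv_eq
  -- time derivative
  have hNt := (((aux_lin (24*c₀) c₁ t).mul_const (x^2)).const_add (3*c₀*x^4)).sub_const c₂
  have hDt := (((aux_lin (24*c₀) c₁ t).mul_const (x^2)).const_add (c₀*x^4)).add_const c₂
  have hT := (hNt.const_mul (Real.sqrt (2*x))).div hDt hD
  simp only [hv]
  rw [hiter]
  rw [show deriv (fun y => g0 c₀ c₁ c₂ t y) x = _ from hg2.deriv]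
  rw [show deriv (fun t => Real.sqrt (2 * x) *
      (3 * c₀ * x ^ 4 + (24 * c₀ * t + c₁) * x ^ 2 - c₂) /
      (c₀ * x ^ 4 + (24 * c₀ * t + c₁) * x ^ 2 + c₂)) t = _ from hT.deriv]
  simp only [Pi.inv_apply, Pi.mul_apply, Pi.add_apply, Pi.sub_apply, Pi.pow_apply]
  norm_num only [Nat.cast_ofNat, pow_one]
  set s := Real.sqrt (2 * x) with hsdef
  have hs2 : s ^ 2 = 2 * x := Real.sq_sqrt (by linarith)
  have hsne : s ≠ 0 := hs0.ne'
  clear_value s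
  have hxne : x ≠ 0 := ne_of_gt hx
  have hD' : x ^ 2 * (c₀ * x ^ 2 + (24 * c₀ * t + c₁)) + c₂ ≠ 0 := by
    convert hD using 1; ring
  field_simp [hsne, hxne, hD, hD']
  have hxv : x = s ^ 2 / 2 := by linarith
  subst hxv
  ring
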